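/- Let T : [0,1] → ℝ be C^∞ and q > 0 with q ≠ 3, p ∈ ℕ, and define Q(r) = ∫_{r³}^1 u^{-q} r^p T(u³) d(u³) for r ∈ (0,1]. If the index I := p − q + 1 satisfies I ≥ 1, then Q extends to r = 0 as a C^I function. -/

import Mathlib

open Set Real Filter MeasureTheory intervalIntegral

lemma rpow_contDiffOn : ∀ (j : ℕ) (γ : ℝ), (j:ℝ) ≤ γ →
    ContDiffOn ℝ (j:ℕ∞) (fun v : ℝ => v ^ γ) (Icc 0 1) := by
  intro j
  induction j with
  | zero =>
    intro γ hγ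
    exact contDiffOn_zero.mpr (Real.continuous_rpow_const (by exact_mod_cast hγ)).continuousOn
  | succ j ih =>
    intro γ hγ
    have hγ' : (j:ℝ) + 1 ≤ γ := by push_cast at hγ; linarith
    have h1 : (1:ℝ) ≤ γ := by
      have : (0:ℝ) ≤ j := Nat.cast_nonneg j
      linarith
    have hd : ∀ x : ℝ, HasDerivAt (fun v : ℝ => v ^ γ) (γ * x ^ (γ-1)) x :=
      fun x => Real.hasDerivAt_rpow_const (Or.inr h1)
    have hu : UniqueDiffOn ℝ (Icc (0:ℝ) 1) := uniqueDiffOn_Icc one_pos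
    suffices h : ContDiffOn ℝ ((j : WithTop ℕ∞) + 1) (fun v : ℝ => v ^ γ) (Icc 0 1) by
      exact_mod_cast h
    rw [contDiffOn_succ_iff_derivWithin hu]
    refine ⟨fun x hx => (hd x).differentiableAt.differentiableWithinAt, by simp, ?_⟩
    have heq : EqOn (derivWithin (fun v : ℝ => v ^ γ) (Icc 0 1))
        (fun x => γ * x ^ (γ-1)) (Icc 0 1) := fun x hx =>
      ((hd x).hasDerivWithinAt).derivWithin (hu x hx)
    exact (ContDiffOn.const_smul (γ) (ih (γ-1) (by linarith))).congr heq |>.congr (fun x hx => rfl)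

lemma rpow_log_continuousOn {γ : ℝ} (hγ : 1 ≤ γ) :
    ContinuousOn (fun v : ℝ => v ^ γ * Real.log v) (Icc 0 1) := by
  have h : EqOn (fun v : ℝ => v ^ (γ-1) * (v * Real.log v))
      (fun v : ℝ => v ^ γ * Real.log v) (Icc 0 1) := by
    intro v hv
    rcases eq_or_lt_of_le hv.1 with h0 | h0
    · simp [← h0, Real.zero_rpow (by linarith : γ ≠ 0), Real.log_zero]
    · simp only
      rw [show γ = (γ-1)+1 by ring, Real.rpow_add_one (ne_of_gt h0) (γ-1)]
      ring
  exact (((Real.continuous_rpow_const (by linarith)).continuousOn).mul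
    Real.continuous_mul_log.continuousOn).congr h.symm

lemma rpow_log_contDiffOn : ∀ (j : ℕ) (γ : ℝ), (j:ℝ) + 1 ≤ γ →
    ContDiffOn ℝ (j:ℕ∞) (fun v : ℝ => v ^ γ * Real.log v) (Icc 0 1) := by
  intro j
  induction j with
  | zero =>
    intro γ hγ
    exact contDiffOn_zero.mpr (rpow_log_continuousOn (by push_cast at hγ; linarith))
  | succ j ih =>
    intro γ hγ
    have hγ' : (j:ℝ) + 2 ≤ γ := by push_cast at hγ; linarith
    have h2 : (2:ℝ) ≤ γ := by have : (0:ℝ) ≤ j := Nat.cast_nonneg j; linarith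
    have hu : UniqueDiffOn ℝ (Icc (0:ℝ) 1) := uniqueDiffOn_Icc one_pos
    set f : ℝ → ℝ := fun v => v ^ γ * Real.log v with hf
    set g : ℝ → ℝ := fun v => γ * (v ^ (γ-1) * Real.log v) + v ^ (γ-1) with hg
    have hd : ∀ x ∈ Icc (0:ℝ) 1, HasDerivWithinAt f (g x) (Icc 0 1) x := by
      intro x hx
      rcases eq_or_lt_of_le hx.1 with h0 | h0
      · -- x = 0
        have hx0 : x = 0 := h0.symm
        subst hx0
        have hg0 : g 0 = 0 := by
          simp [hg, Real.zero_rpow (by linarith : γ - 1 ≠ 0), Real.log_zero]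
        rw [hg0, hasDerivWithinAt_iff_tendsto_slope]
        have hcont := (rpow_log_continuousOn (by linarith : 1 ≤ γ - 1)) 0 (by constructor <;> norm_num)
        have h00 : (0:ℝ) ^ (γ-1) * Real.log 0 = 0 := by
          simp [Real.zero_rpow (by linarith : γ - 1 ≠ 0)]
        have : Tendsto (fun v : ℝ => v ^ (γ-1) * Real.log v) (nhdsWithin 0 (Icc 0 1 \ {0}))
            (nhds 0) := by
          have h := (hcont.mono ((diff_subset) : (Icc (0:ℝ) 1 \ {0}) ⊆ Icc 0 1)).tendsto
          rwa [h00] at h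
        refine this.congr' ?_
        filter_upwards [self_mem_nhdsWithin] with v hv
        have hv0 : v ≠ 0 := by simpa using hv.2
        have hvpos : 0 < v := lt_of_le_of_ne hv.1.1 (Ne.symm hv0)
        simp only [slope_def_field, f]
        rw [Real.zero_rpow (by linarith : γ ≠ 0)]
        rw [show γ = (γ-1)+1 by ring, Real.rpow_add_one hv0 (γ-1)]
        field_simp
        ring
      · -- x > 0
        have hx0 : x ≠ 0 := ne_of_gt h0
        have h1 : HasDerivAt f (γ * x ^ (γ-1) * Real.log x + x ^ γ * x⁻¹) x :=
          (Real.hasDerivAt_rpow_const (Or.inl hx0)).mul (Real.hasDerivAt_log hx0)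
        have : γ * x ^ (γ-1) * Real.log x + x ^ γ * x⁻¹ = g x := by
          rw [hg]
          have : x ^ γ * x⁻¹ = x ^ (γ-1) := by
            rw [Real.rpow_sub h0, Real.rpow_one]; ring
          rw [this]; ring
        rw [this] at h1
        exact h1.hasDerivWithinAt
    suffices h : ContDiffOn ℝ ((j : WithTop ℕ∞) + 1) f (Icc 0 1) by exact_mod_cast h
    rw [contDiffOn_succ_iff_derivWithin hu]
    refine ⟨fun x hx => (hd x hx).differentiableWithinAt, by simp, ?_⟩
    have heq : EqOn (derivWithin f (Icc 0 1)) g (Icc 0 1) := fun x hx =>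
      (hd x hx).derivWithin (hu x hx)
    have hgc : ContDiffOn ℝ (j:ℕ∞) g (Icc 0 1) := by
      apply ContDiffOn.add
      · exact (ih (γ-1) (by linarith)).const_smul γ |>.congr (fun x hx => rfl)
      · exact rpow_contDiffOn j (γ-1) (by push_cast at hγ ⊢; linarith)
    exact (hgc.congr heq).congr (fun x hx => rfl)

lemma ftc_contDiffOn (h : ℝ → ℝ) (hc : Continuous h) (n : ℕ)
    (hn : ContDiffOn ℝ (n:ℕ∞) h (Icc 0 1)) :
    ContDiffOn ℝ (((n+1:ℕ)):ℕ∞) (fun x => ∫ v in x..1, h v) (Icc 0 1) := by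
  have hu : UniqueDiffOn ℝ (Icc (0:ℝ) 1) := uniqueDiffOn_Icc one_pos
  have hd : ∀ x : ℝ, HasDerivAt (fun u => ∫ v in u..1, h v) (-h x) x := by
    intro x
    exact intervalIntegral.integral_hasDerivAt_left (hc.intervalIntegrable x 1)
      (hc.stronglyMeasurable.stronglyMeasurableAtFilter)
      hc.continuousAt
  suffices hh : ContDiffOn ℝ ((n : WithTop ℕ∞) + 1) (fun x => ∫ v in x..1, h v) (Icc 0 1) by
    exact_mod_cast hh
  rw [contDiffOn_succ_iff_derivWithin hu]
  refine ⟨fun x hx => (hd x).differentiableAt.differentiableWithinAt, by simp, ?_⟩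
  have heq : EqOn (derivWithin (fun x => ∫ v in x..1, h v) (Icc 0 1)) (fun x => -h x) (Icc 0 1) :=
    fun x hx => ((hd x).hasDerivWithinAt).derivWithin (hu x hx)
  exact (hn.neg.congr heq)

lemma contOn_aux {γ c d : ℝ} {x : ℝ} (hx : 0 < x) (S : ℝ → ℝ)
    (hScont : ContinuousOn S (Icc 0 1)) (hx1 : x ≤ 1) :
    ContinuousOn (fun v : ℝ => v ^ γ * (c + d * Real.log v) * S v) (Icc x 1) := by
  have hsub : Icc x 1 ⊆ Icc 0 1 := Icc_subset_Icc (le_of_lt hx) le_rfl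
  apply ContinuousOn.mul
  · apply ContinuousOn.mul
    · intro v hv
      exact (Real.continuousAt_rpow_const v γ (Or.inl (ne_of_gt (lt_of_lt_of_le hx hv.1)))).continuousWithinAt
    · apply ContinuousOn.add continuousOn_const
      apply ContinuousOn.mul continuousOn_const
      intro v hv
      exact (Real.continuousAt_log (ne_of_gt (lt_of_lt_of_le hx hv.1))).continuousWithinAt
  · exact hScont.mono hsub

lemma ibp_step (S S' : ℝ → ℝ)
    (hS : ∀ v ∈ Icc (0:ℝ) 1, HasDerivWithinAt S (S' v) (Icc 0 1) v)
    (hScont : ContinuousOn S (Icc 0 1)) (hS'cont : ContinuousOn S' (Icc 0 1))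
    (γ a b c d : ℝ) (hcd1 : (γ+1)*c + d = a) (hcd2 : (γ+1)*d = b)
    (x : ℝ) (hx : x ∈ Ioc (0:ℝ) 1) :
    ∫ v in x..1, v ^ γ * (a + b * Real.log v) * S v
      = c * S 1 - x ^ (γ+1) * (c + d * Real.log x) * S x
        - ∫ v in x..1, v ^ (γ+1) * (c + d * Real.log v) * S' v := by
  obtain ⟨hx0, hx1⟩ := hx
  set g₁ : ℝ → ℝ := fun v => v ^ γ * (a + b * Real.log v) * S v with hg₁
  set g₂ : ℝ → ℝ := fun v => v ^ (γ+1) * (c + d * Real.log v) * S' v with hg₂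
  set F : ℝ → ℝ := fun v => v ^ (γ+1) * (c + d * Real.log v) * S v with hF
  have hc₁ : ContinuousOn g₁ (Icc x 1) := contOn_aux hx0 S hScont hx1
  have hc₂ : ContinuousOn g₂ (Icc x 1) := contOn_aux hx0 S' hS'cont hx1
  have hcF : ContinuousOn F (Icc x 1) := contOn_aux hx0 S hScont hx1
  have hint₁ : IntervalIntegrable g₁ volume x 1 :=
    (hc₁.mono (by rw [uIcc_of_le hx1])).intervalIntegrable
  have hint₂ : IntervalIntegrable g₂ volume x 1 :=
    (hc₂.mono (by rw [uIcc_of_le hx1])).intervalIntegrable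
  have hderiv : ∀ v ∈ Ioo x 1, HasDerivWithinAt F (g₁ v + g₂ v) (Ioi v) v := by
    intro v hv
    have hv0 : 0 < v := lt_trans hx0 hv.1
    have hv0' : v ≠ 0 := ne_of_gt hv0
    have hSv : HasDerivAt S (S' v) v := by
      refine (hS v ⟨le_of_lt hv0, le_of_lt hv.2⟩).hasDerivAt ?_
      exact Icc_mem_nhds hv0 hv.2
    have hG : HasDerivAt (fun v : ℝ => v ^ (γ+1) * (c + d * Real.log v))
        ((γ+1) * v ^ γ * (c + d * Real.log v) + v ^ (γ+1) * (d * v⁻¹)) v := by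
      have h1 : HasDerivAt (fun v : ℝ => v ^ (γ+1)) ((γ+1) * v ^ (γ+1-1)) v :=
        Real.hasDerivAt_rpow_const (Or.inl hv0')
      have h2 : HasDerivAt (fun v : ℝ => c + d * Real.log v) (d * v⁻¹) v := by
        simpa using ((Real.hasDerivAt_log hv0').const_mul d).const_add c
      rw [show γ + 1 - 1 = γ by ring] at h1; exact h1.mul h2
    have := hG.mul hSv
    have heq : ((γ+1) * v ^ γ * (c + d * Real.log v) + v ^ (γ+1) * (d * v⁻¹)) * S v
        + v ^ (γ+1) * (c + d * Real.log v) * S' v = g₁ v + g₂ v := by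
      rw [hg₁, hg₂]
      simp only
      rw [Real.rpow_add_one hv0' γ]
      field_simp
      rw [← hcd1, ← hcd2]
      ring
    rw [heq] at this
    exact this.hasDerivWithinAt
  have key : ∫ v in x..1, (g₁ v + g₂ v) = F 1 - F x :=
    integral_eq_sub_of_hasDeriv_right_of_le hx1 hcF hderiv
      ((hint₁.add hint₂))
  rw [integral_add hint₁ hint₂] at key
  have hF1 : F 1 = c * S 1 := by
    rw [hF]; simp [Real.one_rpow, Real.log_one]
  have hFx : F x = x ^ (γ+1) * (c + d * Real.log x) * S x := rfl
  rw [hF1, hFx] at key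
  linarith [key]

noncomputable def stepCD (γ a b : ℝ) : ℝ × ℝ :=
  if γ = -1 then (0, a) else (a/(γ+1) - b/(γ+1)^2, b/(γ+1))

noncomputable def abSeq (q : ℕ) : ℕ → ℝ × ℝ
  | 0 => (1, 0)
  | j+1 =>
    let cd := stepCD ((j:ℝ) - (q:ℝ)/3) (abSeq q j).1 (abSeq q j).2
    (-cd.1, -cd.2)

lemma abSeq_snd (q : ℕ) : ∀ j : ℕ, (∀ i : ℕ, i < j → (i:ℝ) - (q:ℝ)/3 ≠ -1) →
    (abSeq q j).2 = 0 := by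
  intro j
  induction j with
  | zero => intro _; rfl
  | succ j ih =>
    intro h
    have hj : (j:ℝ) - (q:ℝ)/3 ≠ -1 := h j (Nat.lt_succ_self j)
    have hb : (abSeq q j).2 = 0 := ih (fun i hi => h i (Nat.lt_succ_of_lt hi))
    simp only [abSeq, stepCD, if_neg hj, hb]
    simp

lemma stepCD_rel (q : ℕ) (j : ℕ) :
    (((j:ℝ) - (q:ℝ)/3) + 1) * (stepCD ((j:ℝ) - (q:ℝ)/3) (abSeq q j).1 (abSeq q j).2).1
        + (stepCD ((j:ℝ) - (q:ℝ)/3) (abSeq q j).1 (abSeq q j).2).2 = (abSeq q j).1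
    ∧ (((j:ℝ) - (q:ℝ)/3) + 1) * (stepCD ((j:ℝ) - (q:ℝ)/3) (abSeq q j).1 (abSeq q j).2).2
        = (abSeq q j).2 := by
  set γ := (j:ℝ) - (q:ℝ)/3 with hγ
  by_cases hone : γ = -1
  · have hb : (abSeq q j).2 = 0 := by
      apply abSeq_snd
      intro i hi hcon
      rw [hγ] at hone
      have : (i:ℝ) = (j:ℝ) := by linarith
      have : i = j := by exact_mod_cast this
      omega
    simp [stepCD, if_pos hone, hone, hb]
  · have hne : γ + 1 ≠ 0 := fun hcon => hone (by linarith)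
    refine ⟨?_, ?_⟩ <;> simp only [stepCD, if_neg hone] <;> field_simp <;> ring
lemma telescope (q : ℕ) (S : ℕ → ℝ → ℝ)
    (hD : ∀ j, ∀ v ∈ Icc (0:ℝ) 1, HasDerivWithinAt (S j) (S (j+1) v) (Icc 0 1) v)
    (hC : ∀ j, ContinuousOn (S j) (Icc 0 1)) :
    ∀ n : ℕ, ∀ x ∈ Ioc (0:ℝ) 1,
    (∫ v in x..1, v ^ (((0:ℕ):ℝ) - (q:ℝ)/3) * ((abSeq q 0).1 + (abSeq q 0).2 * Real.log v) * S 0 v)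
    = (∑ j ∈ Finset.range n,
        ((stepCD ((j:ℝ) - (q:ℝ)/3) (abSeq q j).1 (abSeq q j).2).1 * S j 1
          - x ^ (((j+1:ℕ):ℝ) - (q:ℝ)/3) *
            ((stepCD ((j:ℝ) - (q:ℝ)/3) (abSeq q j).1 (abSeq q j).2).1
              + (stepCD ((j:ℝ) - (q:ℝ)/3) (abSeq q j).1 (abSeq q j).2).2 * Real.log x) * S j x))
      + ∫ v in x..1, v ^ (((n:ℕ):ℝ) - (q:ℝ)/3) * ((abSeq q n).1 + (abSeq q n).2 * Real.log v) * S n v := by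
  intro n
  induction n with
  | zero => intro x hx; simp
  | succ n ih =>
    intro x hx
    rw [ih x hx, Finset.sum_range_succ]
    set c := (stepCD ((n:ℝ) - (q:ℝ)/3) (abSeq q n).1 (abSeq q n).2).1 with hc
    set d := (stepCD ((n:ℝ) - (q:ℝ)/3) (abSeq q n).1 (abSeq q n).2).2 with hd
    obtain ⟨h1, h2⟩ := stepCD_rel q n
    have hstep := ibp_step (S n) (S (n+1)) (hD n) (hC n) (hC (n+1))
      ((n:ℝ) - (q:ℝ)/3) (abSeq q n).1 (abSeq q n).2 c d h1 h2 x hx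
    have hexp : ((n:ℝ) - (q:ℝ)/3) + 1 = (((n+1:ℕ)):ℝ) - (q:ℝ)/3 := by push_cast; ring
    have hab : (abSeq q (n+1)).1 = -c ∧ (abSeq q (n+1)).2 = -d := by
      constructor <;> simp [abSeq, hc, hd]
    have hnewint : (∫ v in x..1, v ^ ((((n+1:ℕ)):ℝ) - (q:ℝ)/3) *
          ((abSeq q (n+1)).1 + (abSeq q (n+1)).2 * Real.log v) * S (n+1) v)
        = -∫ v in x..1, v ^ (((n:ℝ) - (q:ℝ)/3) + 1) * (c + d * Real.log v) * S (n+1) v := by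
      rw [← intervalIntegral.integral_neg]
      apply intervalIntegral.integral_congr
      intro v hv
      rw [hab.1, hab.2, hexp]
      ring_nf
    rw [hexp] at hstep hnewint
    rw [hstep, hnewint]
    ring
/-- Let `T : [0,1] → ℝ` be `C^∞`, `q > 0`, `q ≠ 3`, `p ∈ ℕ`, and
`Q(r) = ∫_{r³}^1 u^{-q} r^p T(u³) d(u³)` (variable `v = u³`).  If the index
`I := p - q + 1` satisfies `I ≥ 1`, then `Q` extends to `r = 0` as a `C^I` function. -/
theorem stmt_15 (T : ℝ → ℝ) (hT : ContDiffOn ℝ (⊤ : ℕ∞) T (Set.Icc (0:ℝ) 1))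
    (q p : ℕ) (hq0 : 0 < q) (hq : q ≠ 3) (hI : q ≤ p) :
    ∃ Qext : ℝ → ℝ,
      (∀ r ∈ Set.Ioc (0:ℝ) 1,
        Qext r = ∫ v in (r^3)..1, v ^ (-(q:ℝ)/3) * r ^ p * T v) ∧
      ContDiffOn ℝ ((p + 1 - q : ℕ) : ℕ∞) Qext (Set.Icc 0 1) := by
  have hu : UniqueDiffOn ℝ (Icc (0:ℝ) 1) := uniqueDiffOn_Icc one_pos
  set k : ℕ := p + 1 - q with hk
  have hk1 : 1 ≤ k := by omega
  set N : ℕ := p + 1 with hN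
  have hqp : (q:ℝ) ≤ (p:ℝ) := by exact_mod_cast hI
  have hkcast : (k:ℝ) = (p:ℝ) + 1 - q := by
    rw [hk, Nat.cast_sub (by omega), hN]; push_cast; ring
  -- the sequence of derivatives of T
  set S : ℕ → ℝ → ℝ := fun j => (fun f : ℝ → ℝ => derivWithin f (Icc (0:ℝ) 1))^[j] T with hSdef
  have hS0 : S 0 = T := rfl
  have hSsucc : ∀ j, S (j+1) = derivWithin (S j) (Icc 0 1) := by
    intro j; rw [hSdef]; exact Function.iterate_succ_apply' _ _ _
  have hSsm : ∀ j, ContDiffOn ℝ (⊤:ℕ∞) (S j) (Icc 0 1) := by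
    intro j; induction j with
    | zero => rw [hS0]; exact hT
    | succ j ih => rw [hSsucc j]; exact ih.derivWithin hu (by simp)
  have hC : ∀ j, ContinuousOn (S j) (Icc 0 1) := fun j => (hSsm j).continuousOn
  have hD : ∀ j, ∀ v ∈ Icc (0:ℝ) 1, HasDerivWithinAt (S j) (S (j+1) v) (Icc 0 1) v := by
    intro j v hv
    have h1 := (((hSsm j).differentiableOn (by simp)) v hv).hasDerivWithinAt
    rw [hSsucc j]
    exact h1
  -- coefficients
  set cj : ℕ → ℝ := fun j => (stepCD ((j:ℝ) - (q:ℝ)/3) (abSeq q j).1 (abSeq q j).2).1 with hcj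
  set dj : ℕ → ℝ := fun j => (stepCD ((j:ℝ) - (q:ℝ)/3) (abSeq q j).1 (abSeq q j).2).2 with hdj
  set e : ℕ → ℕ := fun j => p + 3*(j+1) - q with he
  have hecast : ∀ j, ((e j : ℕ) : ℝ) = (p:ℝ) + 3*((j:ℝ)+1) - q := by
    intro j
    rw [he]
    simp only
    rw [Nat.cast_sub (by omega)]
    push_cast; ring
  -- smoothness of natural powers
  have hpow : ∀ m : ℕ, ContDiffOn ℝ (k:ℕ∞) (fun r : ℝ => r ^ m) (Icc 0 1) := by
    intro m
    exact ContDiff.contDiffOn (by fun_prop)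
  have hmaps : MapsTo (fun r : ℝ => r ^ 3) (Icc 0 1) (Icc 0 1) :=
    fun r hr => ⟨pow_nonneg hr.1 3, pow_le_one₀ hr.1 hr.2⟩
  have hScomp : ∀ j, ContDiffOn ℝ (k:ℕ∞) (fun r : ℝ => S j (r^3)) (Icc 0 1) := by
    intro j
    exact ContDiffOn.comp ((hSsm j).of_le (by exact_mod_cast OrderTop.le_top _)) (hpow 3) hmaps
  -- the remainder integrand
  set hraw : ℝ → ℝ := fun v =>
    ((abSeq q N).1 * v ^ ((N:ℝ) - (q:ℝ)/3)
      + (abSeq q N).2 * (v ^ ((N:ℝ) - (q:ℝ)/3) * Real.log v)) * S N v with hhraw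
  have hγN1 : (1:ℝ) ≤ (N:ℝ) - (q:ℝ)/3 := by
    rw [hN]; push_cast; linarith
  set clamp : ℝ → ℝ := fun v => min 1 (max 0 v) with hclamp
  have hclampcont : Continuous clamp := continuous_const.min (continuous_const.max continuous_id)
  have hclampmem : ∀ v, clamp v ∈ Icc (0:ℝ) 1 := fun v =>
    ⟨le_min zero_le_one (le_max_left 0 v), min_le_left 1 _⟩
  have hclampid : ∀ v ∈ Icc (0:ℝ) 1, clamp v = v := by
    intro v hv
    rw [hclamp]
    simp only
    rw [max_eq_right hv.1, min_eq_right hv.2]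
  set htld : ℝ → ℝ := fun v => hraw (clamp v) with hhtld
  have hrawcont : ContinuousOn hraw (Icc 0 1) :=
    ((continuousOn_const.mul (Real.continuous_rpow_const (by linarith)).continuousOn).add
      (continuousOn_const.mul (rpow_log_continuousOn hγN1))).mul (hC N)
  have htldcont : Continuous htld := hrawcont.comp_continuous hclampcont hclampmem
  have htldeq : EqOn htld hraw (Icc 0 1) := by
    intro v hv
    rw [hhtld]
    simp only
    rw [hclampid v hv]
  have hrawsm : ContDiffOn ℝ (((k-1:ℕ)):ℕ∞) hraw (Icc 0 1) := by
    apply ContDiffOn.mul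
    apply ContDiffOn.add
    · exact contDiffOn_const.mul (rpow_contDiffOn (k-1) _
        (by rw [Nat.cast_sub hk1, hkcast, hN]; push_cast; linarith))
    · exact contDiffOn_const.mul (rpow_log_contDiffOn (k-1) _
        (by rw [Nat.cast_sub hk1, hkcast, hN]; push_cast; linarith))
    · exact (hSsm N).of_le (by exact_mod_cast OrderTop.le_top _)
  have htldsm : ContDiffOn ℝ (((k-1:ℕ)):ℕ∞) htld (Icc 0 1) := hrawsm.congr htldeq
  set Φ : ℝ → ℝ := fun x => ∫ v in x..1, htld v with hΦ
  have hΦsm : ContDiffOn ℝ ((k:ℕ):ℕ∞) Φ (Icc 0 1) := by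
    have h1 := ftc_contDiffOn htld htldcont (k-1) htldsm
    rwa [show k - 1 + 1 = k by omega] at h1
  refine ⟨fun r =>
      (∑ j ∈ Finset.range N, cj j * S j 1) * r ^ p
      - (∑ j ∈ Finset.range N, (cj j * (r ^ (e j) * S j (r^3))
          + 3 * dj j * ((r ^ (e j) * Real.log r) * S j (r^3))))
      + r ^ p * Φ (r^3), ?_, ?_⟩
  · -- the equality on Ioc 0 1
    intro r hr
    obtain ⟨hr0, hr1⟩ := hr
    have hx : r^3 ∈ Ioc (0:ℝ) 1 := ⟨pow_pos hr0 3, pow_le_one₀ hr0.le hr1⟩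
    have hxmem : r^3 ∈ Icc (0:ℝ) 1 := ⟨hx.1.le, hx.2⟩
    have tele := telescope q S hD hC N (r^3) hx
    have rem : (∫ v in (r^3)..1, v ^ (((N:ℕ):ℝ) - (q:ℝ)/3)
          * ((abSeq q N).1 + (abSeq q N).2 * Real.log v) * S N v) = Φ (r^3) := by
      rw [hΦ]
      apply intervalIntegral.integral_congr
      intro v hv
      rw [uIcc_of_le hx.2] at hv
      have hv' : v ∈ Icc (0:ℝ) 1 := ⟨le_trans hxmem.1 hv.1, hv.2⟩
      rw [htldeq hv', hhraw]
      ring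
    rw [rem] at tele
    have tl : (∫ v in (r^3)..1, v ^ (-(q:ℝ)/3) * T v)
        = ∫ v in (r^3)..1, v ^ (((0:ℕ):ℝ) - (q:ℝ)/3)
            * ((abSeq q 0).1 + (abSeq q 0).2 * Real.log v) * S 0 v := by
      apply intervalIntegral.integral_congr
      intro v hv
      rw [hS0]
      have hzero : ((0:ℕ):ℝ) - (q:ℝ)/3 = -(q:ℝ)/3 := by push_cast; ring
      rw [hzero]
      show v ^ (-(q:ℝ)/3) * T v = v ^ (-(q:ℝ)/3) * ((abSeq q 0).1 + (abSeq q 0).2 * Real.log v) * T v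
      have : abSeq q 0 = (1, 0) := rfl
      rw [this]
      norm_num
    have hRHS : (∫ v in (r^3)..1, v ^ (-(q:ℝ)/3) * r^p * T v)
        = r^p * ∫ v in (r^3)..1, v ^ (-(q:ℝ)/3) * T v := by
      rw [← intervalIntegral.integral_const_mul]
      apply intervalIntegral.integral_congr
      intro v hv
      ring
    rw [hRHS, tl, tele, mul_add, Finset.mul_sum]
    have hterm : ∀ j ∈ Finset.range N,
        r^p * (cj j * S j 1 - (r^3) ^ (((j+1:ℕ):ℝ) - (q:ℝ)/3)
            * (cj j + dj j * Real.log (r^3)) * S j (r^3))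
        = cj j * S j 1 * r^p - (cj j * (r ^ (e j) * S j (r^3))
            + 3 * dj j * ((r ^ (e j) * Real.log r) * S j (r^3))) := by
      intro j hj
      have hxpow : (r^3) ^ (((j+1:ℕ):ℝ) - (q:ℝ)/3) = r ^ ((3*((j:ℝ)+1) - q : ℝ)) := by
        rw [← Real.rpow_natCast r 3, ← Real.rpow_mul hr0.le]
        congr 1
        push_cast; ring
      have hrp : (r:ℝ)^p * r ^ ((3*((j:ℝ)+1) - q:ℝ)) = r ^ (e j) := by
        rw [← Real.rpow_natCast r p, ← Real.rpow_add hr0]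
        rw [← Real.rpow_natCast r (e j)]
        congr 1
        rw [hecast j]
        ring
      have hlogx : Real.log (r^3) = 3 * Real.log r := by
        have := Real.log_pow r 3
        push_cast at this
        exact this
      calc r^p * (cj j * S j 1 - (r^3) ^ (((j+1:ℕ):ℝ) - (q:ℝ)/3)
              * (cj j + dj j * Real.log (r^3)) * S j (r^3))
          = cj j * S j 1 * r^p - (r^p * r ^ ((3*((j:ℝ)+1) - q:ℝ)))
              * (cj j + dj j * (3 * Real.log r)) * S j (r^3) := by
            rw [hxpow, hlogx]; ring
        _ = _ := by rw [hrp]; ring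
    rw [Finset.sum_congr rfl hterm, Finset.sum_sub_distrib]
    beta_reduce
    rw [Finset.sum_mul]
  · -- smoothness
    apply ContDiffOn.add
    apply ContDiffOn.sub
    · exact contDiffOn_const.mul (hpow p)
    · apply ContDiffOn.sum
      intro j hj
      have hej : ((k:ℕ):ℝ) + 1 ≤ ((e j : ℕ):ℝ) := by
        rw [hecast j, hkcast]
        have : (0:ℝ) ≤ (j:ℝ) := Nat.cast_nonneg j
        linarith
      have hlogj : ContDiffOn ℝ ((k:ℕ):ℕ∞) (fun r : ℝ => r ^ (e j) * Real.log r) (Icc 0 1) := by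
        have h1 := rpow_log_contDiffOn k ((e j : ℕ):ℝ) hej
        have h2 : (fun v : ℝ => v ^ ((e j : ℕ):ℝ) * Real.log v)
            = fun r : ℝ => r ^ (e j) * Real.log r := by
          funext v
          rw [Real.rpow_natCast]
        rwa [h2] at h1
      apply ContDiffOn.add
      · exact contDiffOn_const.mul ((hpow (e j)).mul (hScomp j))
      · exact contDiffOn_const.mul (hlogj.mul (hScomp j))
    · exact (hpow p).mul (ContDiffOn.comp hΦsm (hpow 3) hmaps)
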